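/- Let d ≥ 1 and for each i = 1, …, d let ℓ_i > 0, α_i > 0 with associated constants ε_i, β_i, δ_i, eigenfunctions φ^i_n, and let x_{i,1}^GH, …, x_{i,N_i}^GH and w_{i,1}^GH, …, w_{i,N_i}^GH be the nodes and weights of the N_i-point Gauss–Hermite rule. Define the scaled nodes x̃_{i,n} = x_{i,n}^GH/(√2·α_i·β_i) and the weights w̃^i_n = (1+2δ_i²)^{−1/2}·w_{i,n}^GH·e^{δ_i²·x̃_{i,n}²}·∑_{m=0}^{⌊(N_i−1)/2⌋} (1/(2^m·m!))·(2α_i²β_i²/(1+2δ_i²) − 1)^m·H_{2m}(x_{i,n}^GH). Then for every multi-index I with I(i) ≤ N_i−1 for all i: ∑_{J : 1 ≤ J(i) ≤ N_i} (∏_{i=1}^d w̃^i_{J(i)}) · ∏_{i=1}^d φ^i_{I(i)}(x̃_{i,J(i)}) = ∫_{ℝ^d} ∏_{i=1}^d φ^i_{I(i)}(y_i) dμ^d(y). -/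

import Mathlib

open MeasureTheory ProbabilityTheory Polynomial Real
open scoped NNReal ENNReal

/-- Probabilists' Hermite polynomial evaluated at a real number. -/
noncomputable def H (n : ℕ) (x : ℝ) : ℝ := Polynomial.aeval x (Polynomial.hermite n)

/-- The standard Gaussian measure on ℝ. -/
noncomputable def stdGauss : Measure ℝ := gaussianReal 0 1

instance : IsProbabilityMeasure stdGauss := by unfold stdGauss; infer_instance

noncomputable def hermiteR (n : ℕ) : Polynomial ℝ := (Polynomial.hermite n).map (Int.castRingHom ℝ)

lemma H_eq (n : ℕ) (x : ℝ) : H n x = (hermiteR n).eval x := by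
  rw [H, hermiteR, aeval_def, eval₂_eq_eval_map]
  norm_num

lemma hermiteR_zero : hermiteR 0 = 1 := by simp [hermiteR]

lemma hermiteR_succ (n : ℕ) :
    hermiteR (n + 1) = X * hermiteR n - derivative (hermiteR n) := by
  simp [hermiteR, hermite_succ, Polynomial.map_mul, Polynomial.map_sub, derivative_map]

lemma natDegree_hermiteR (n : ℕ) : (hermiteR n).natDegree = n := by
  rw [hermiteR, natDegree_map_eq_of_injective (Int.cast_injective)]
  exact Polynomial.natDegree_hermite

-- integrability
lemma integrable_pow_mul_exp (k : ℕ) {b : ℝ} (hb : 0 < b) :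
    Integrable fun x : ℝ => x ^ k * Real.exp (-b * x ^ 2) := by
  have h : (-1 : ℝ) < k := lt_of_lt_of_le (by norm_num) (Nat.cast_nonneg k)
  simpa [Real.rpow_natCast] using integrable_rpow_mul_exp_neg_mul_sq hb h

lemma integrable_poly_mul_exp (p : Polynomial ℝ) {b : ℝ} (hb : 0 < b) :
    Integrable fun x : ℝ => p.eval x * Real.exp (-b * x ^ 2) := by
  have : (fun x : ℝ => p.eval x * Real.exp (-b * x ^ 2)) =
      fun x => ∑ i ∈ Finset.range (p.natDegree + 1),
        p.coeff i * (x ^ i * Real.exp (-b * x ^ 2)) := by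
    funext x
    rw [eval_eq_sum_range, Finset.sum_mul]
    simp [mul_assoc]
  rw [this]
  exact integrable_finset_sum _ fun i _ => (integrable_pow_mul_exp i hb).const_mul _

lemma pdf_eval (m : ℝ) (v : ℝ≥0) (x : ℝ) :
    gaussianPDFReal m v x = (Real.sqrt (2 * π * v))⁻¹ * Real.exp (-(x - m) ^ 2 / (2 * v)) :=
  congrFun (gaussianPDFReal_def m v) x

lemma pdf_std (x : ℝ) :
    gaussianPDFReal 0 1 x = (Real.sqrt (2 * π))⁻¹ * Real.exp (-(1/2) * x ^ 2) := by
  simp only [gaussianPDFReal_def, NNReal.coe_one, mul_one, sub_zero]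
  congr 2
  ring

lemma integral_gaussianReal_bridge (m : ℝ) (v : ℝ≥0) (hv : v ≠ 0) (g : ℝ → ℝ) :
    ∫ x, g x ∂(gaussianReal m v) = ∫ x, gaussianPDFReal m v x * g x := by
  rw [gaussianReal_of_var_ne_zero m hv]
  have hpdf : gaussianPDF m v = fun x => ((gaussianPDFReal m v x).toNNReal : ℝ≥0∞) := rfl
  rw [hpdf, integral_withDensity_eq_integral_smul ((measurable_gaussianPDFReal m v).real_toNNReal) g]
  congr 1
  funext x
  simp [NNReal.smul_def, Real.coe_toNNReal _ (gaussianPDFReal_nonneg m v x)]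

lemma integral_stdGauss_eq (g : ℝ → ℝ) :
    ∫ x, g x ∂stdGauss = ∫ x, gaussianPDFReal 0 1 x * g x := by
  rw [stdGauss]; exact integral_gaussianReal_bridge 0 1 one_ne_zero g

lemma integrable_poly_stdGauss (p : Polynomial ℝ) :
    Integrable (fun x => p.eval x) stdGauss := by
  rw [stdGauss, gaussianReal_of_var_ne_zero 0 one_ne_zero]
  have hpdf : gaussianPDF 0 1 = fun x => ((gaussianPDFReal 0 1 x).toNNReal : ℝ≥0∞) := rfl
  rw [hpdf, integrable_withDensity_iff_integrable_smul ((measurable_gaussianPDFReal 0 1).real_toNNReal)]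
  have : (fun x => (gaussianPDFReal 0 1 x).toNNReal • p.eval x) =
      fun x => (Real.sqrt (2 * π))⁻¹ * (p.eval x * Real.exp (-(1/2) * x ^ 2)) := by
    funext x
    rw [NNReal.smul_def, Real.coe_toNNReal _ (gaussianPDFReal_nonneg 0 1 x), pdf_std,
      smul_eq_mul]
    ring
  rw [this]
  exact (integrable_poly_mul_exp p (by norm_num)).const_mul _

lemma integral_stdGauss_poly (p : Polynomial ℝ) :
    ∫ x, p.eval x ∂stdGauss
      = (Real.sqrt (2 * π))⁻¹ * ∫ x, p.eval x * Real.exp (-(1/2) * x ^ 2) := by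
  rw [integral_stdGauss_eq, ← integral_const_mul]
  congr 1; funext x; rw [pdf_std]; ring

-- Stein's identity for polynomials
lemma stein (p : Polynomial ℝ) :
    ∫ x, (X * p : Polynomial ℝ).eval x ∂stdGauss
      = ∫ x, (derivative p).eval x ∂stdGauss := by
  rw [integral_stdGauss_poly, integral_stdGauss_poly]
  congr 1
  have hf : ∀ x : ℝ, HasDerivAt (fun y => p.eval y * Real.exp (-(1/2) * y ^ 2))
      (((derivative p).eval x - x * p.eval x) * Real.exp (-(1/2) * x ^ 2)) x := by
    intro x
    have h1 := p.hasDerivAt x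
    have h2 : HasDerivAt (fun y : ℝ => Real.exp (-(1/2) * y ^ 2))
        (Real.exp (-(1/2) * x ^ 2) * (-(1/2) * (2 * x ^ 1))) x :=
      ((hasDerivAt_pow 2 x).const_mul (-(1/2))).exp
    have : HasDerivAt (fun y => p.eval y * Real.exp (-(1/2) * y ^ 2)) _ x := h1.mul h2
    convert this using 1
    ring
  have hint : Integrable (fun x : ℝ =>
      ((derivative p).eval x - x * p.eval x) * Real.exp (-(1/2) * x ^ 2)) := by
    have := integrable_poly_mul_exp (derivative p - X * p) (b := 1/2) (by norm_num)
    simpa using this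
  have hzero := integral_eq_zero_of_hasDerivAt_of_integrable hf hint
    (integrable_poly_mul_exp p (by norm_num))
  have h1 : Integrable (fun x : ℝ => (derivative p).eval x * Real.exp (-(1/2) * x ^ 2)) :=
    integrable_poly_mul_exp _ (by norm_num)
  have h2 : Integrable (fun x : ℝ => (X * p : Polynomial ℝ).eval x * Real.exp (-(1/2) * x ^ 2)) :=
    integrable_poly_mul_exp _ (by norm_num)
  have : (fun x : ℝ => ((derivative p).eval x - x * p.eval x) * Real.exp (-(1/2) * x ^ 2)) =
      fun x => (derivative p).eval x * Real.exp (-(1/2) * x ^ 2)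
        - (X * p : Polynomial ℝ).eval x * Real.exp (-(1/2) * x ^ 2) := by
    funext x; simp; ring
  rw [this, integral_sub h1 h2, sub_eq_zero] at hzero
  exact hzero.symm

lemma int_stdGauss_one : ∫ x, (1 : Polynomial ℝ).eval x ∂stdGauss = 1 := by
  simp

lemma int_herm_mul (n : ℕ) : ∀ p : Polynomial ℝ,
    ∫ x, (hermiteR n * p).eval x ∂stdGauss
      = ∫ x, (derivative^[n] p).eval x ∂stdGauss := by
  induction n with
  | zero => intro p; simp [hermiteR_zero]
  | succ n ih =>
    intro p
    have hq : (hermiteR (n+1) * p : Polynomial ℝ)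
        = X * (hermiteR n * p) - (derivative (hermiteR n * p) - hermiteR n * derivative p) := by
      rw [hermiteR_succ, derivative_mul]; ring
    rw [hq]
    have hi1 := integrable_poly_stdGauss (X * (hermiteR n * p))
    have hi2 := integrable_poly_stdGauss (derivative (hermiteR n * p) - hermiteR n * derivative p)
    have : ∀ x : ℝ, (X * (hermiteR n * p) -
        (derivative (hermiteR n * p) - hermiteR n * derivative p) : Polynomial ℝ).eval x
        = (X * (hermiteR n * p) : Polynomial ℝ).eval x
          - (derivative (hermiteR n * p) - hermiteR n * derivative p).eval x := by
      intro x; simp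
    simp only [this]
    rw [integral_sub hi1 hi2, stein (hermiteR n * p)]
    have : ∀ x : ℝ, (derivative (hermiteR n * p) - hermiteR n * derivative p).eval x
        = (derivative (hermiteR n * p)).eval x - (hermiteR n * derivative p).eval x := by
      intro x; simp
    simp only [this]
    rw [integral_sub (integrable_poly_stdGauss _) (integrable_poly_stdGauss _)]
    rw [ih (derivative p), Function.iterate_succ_apply]
    ring

lemma int_hermiteR (r : ℕ) :
    ∫ x, (hermiteR r).eval x ∂stdGauss = if r = 0 then 1 else 0 := by
  have := int_herm_mul r 1
  rw [mul_one] at this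
  rw [this]
  rcases Nat.eq_zero_or_pos r with h | h
  · subst h; simp
  · rw [if_neg h.ne']
    rw [Polynomial.iterate_derivative_eq_zero (by simpa using h)]
    simp

lemma derivative_hermiteR (n : ℕ) :
    derivative (hermiteR (n + 1)) = ((n : ℝ) + 1) • hermiteR n := by
  induction n with
  | zero =>
    have h1 : hermiteR 1 = X := by
      rw [hermiteR_succ, hermiteR_zero]; simp
    rw [h1, hermiteR_zero]; simp
  | succ n ih =>
    rw [hermiteR_succ (n+1), derivative_sub, derivative_mul, derivative_X, one_mul, ih,
      hermiteR_succ n]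
    push_cast
    rw [derivative_smul]
    simp only [smul_eq_C_mul, C_add, C_1]
    ring

lemma iterate_derivative_hermiteR (j k : ℕ) (h : j ≤ k) :
    derivative^[j] (hermiteR k) = (k.descFactorial j : ℝ) • hermiteR (k - j) := by
  induction j with
  | zero => simp
  | succ j ih =>
    have hj : j ≤ k := Nat.le_of_succ_le h
    rw [Function.iterate_succ_apply', ih hj, derivative_smul]
    obtain ⟨m, hm⟩ : ∃ m, k - j = m + 1 :=
      ⟨k - j - 1, by omega⟩
    rw [hm, derivative_hermiteR m, smul_smul]
    have h1 : k - (j+1) = m := by omega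
    rw [h1]
    congr 1
    have : k.descFactorial (j+1) = (k - j) * k.descFactorial j := Nat.descFactorial_succ k j
    rw [this, hm]
    push_cast
    ring

lemma ortho (j k : ℕ) :
    ∫ x, (hermiteR j * hermiteR k).eval x ∂stdGauss
      = if j = k then (k.factorial : ℝ) else 0 := by
  rw [int_herm_mul j (hermiteR k)]
  rcases le_or_gt j k with h | h
  · rw [iterate_derivative_hermiteR j k h]
    have : ∀ x : ℝ, (((k.descFactorial j : ℝ)) • hermiteR (k - j)).eval x
        = (k.descFactorial j : ℝ) * (hermiteR (k - j)).eval x := by intro x; simp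
    simp only [this]
    rw [integral_const_mul, int_hermiteR]
    rcases eq_or_lt_of_le h with rfl | hlt
    · simp [Nat.descFactorial_self]
    · rw [if_neg (by omega), if_neg hlt.ne, mul_zero]
  · rw [Polynomial.iterate_derivative_eq_zero (by rw [natDegree_hermiteR]; exact h)]
    simp [if_neg h.ne']

lemma integral_X_stdGauss : ∫ x : ℝ, x ∂stdGauss = 0 := by
  have h := stein 1
  rw [mul_one] at h
  simpa using h

lemma int_herm_scaled (c : ℝ) : ∀ n : ℕ,
    ∫ x, ((hermiteR n).comp (C c * X)).eval x ∂stdGauss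
      = if Even n then
          (n.factorial : ℝ) / (2 ^ (n / 2) * ((n / 2).factorial : ℝ)) * (c ^ 2 - 1) ^ (n / 2)
        else 0 := by
  intro n
  induction n using Nat.twoStepInduction with
  | zero => simp [hermiteR_zero]
  | one =>
    have h1 : hermiteR 1 = X := by rw [hermiteR_succ, hermiteR_zero]; simp
    rw [h1]
    simp only [X_comp]
    have : ∀ x : ℝ, (C c * X : Polynomial ℝ).eval x = c * x := by intro x; simp
    simp only [this]
    rw [integral_const_mul, integral_X_stdGauss]
    simp [Nat.not_even_one]
  | more n ih _ =>
    have hpoly : (hermiteR (n + 2)).comp (C c * X)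
        = c • (X * ((hermiteR (n+1)).comp (C c * X)))
          - ((n : ℝ) + 1) • ((hermiteR n).comp (C c * X)) := by
      have h2 : hermiteR (n + 2) = X * hermiteR (n+1) - ((n : ℝ) + 1) • hermiteR n := by
        rw [hermiteR_succ (n+1), derivative_hermiteR n]
      rw [h2, sub_comp, mul_comp, X_comp, smul_comp]
      congr 1
      rw [smul_eq_C_mul]
      ring
    rw [hpoly]
    have heval : ∀ x : ℝ, (c • (X * ((hermiteR (n+1)).comp (C c * X)))
        - ((n : ℝ) + 1) • ((hermiteR n).comp (C c * X)) : Polynomial ℝ).eval x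
        = c * (X * ((hermiteR (n+1)).comp (C c * X))).eval x
          - ((n : ℝ) + 1) * ((hermiteR n).comp (C c * X)).eval x := by
      intro x; simp
    simp only [heval]
    rw [integral_sub ((integrable_poly_stdGauss _).const_mul c)
      ((integrable_poly_stdGauss _).const_mul _), integral_const_mul, integral_const_mul,
      stein ((hermiteR (n+1)).comp (C c * X))]
    have hder : derivative ((hermiteR (n+1)).comp (C c * X))
        = (c * ((n : ℝ) + 1)) • ((hermiteR n).comp (C c * X)) := by
      rw [derivative_comp, derivative_hermiteR n, smul_comp]
      simp only [derivative_mul, derivative_C, derivative_X, zero_mul, mul_one, zero_add]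
      rw [smul_eq_C_mul, smul_eq_C_mul, ← mul_assoc, ← C_mul]
    rw [hder]
    have heval2 : ∀ x : ℝ, ((c * ((n : ℝ) + 1)) •
        ((hermiteR n).comp (C c * X)) : Polynomial ℝ).eval x
        = (c * ((n : ℝ) + 1)) * ((hermiteR n).comp (C c * X)).eval x := by intro x; simp
    simp only [heval2]
    rw [integral_const_mul, ih]
    have hm2 : (n + 2) / 2 = n / 2 + 1 := Nat.add_div_right n (by norm_num)
    by_cases hev : Even n
    · obtain ⟨m, hm⟩ := id hev
      have hnm : n = 2 * m := by omega
      have hev2 : Even (n + 2) := by exact ⟨m + 1, by omega⟩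
      rw [if_pos hev, if_pos hev2, hm2]
      have hd : n / 2 = m := by omega
      rw [hd, hnm]
      have hfac1 : ((2*m+2).factorial : ℝ) = (2*m+2) * ((2*m+1)) * ((2*m).factorial : ℝ) := by
        have : 2*m+2 = (2*m+1) + 1 := by ring
        rw [this, Nat.factorial_succ]
        push_cast [Nat.factorial_succ]
        ring
      have hfac2 : ((m+1).factorial : ℝ) = (m+1) * (m.factorial : ℝ) := by
        push_cast [Nat.factorial_succ]; ring
      rw [hfac1, hfac2, pow_succ, pow_succ]
      have hne1 : ((2*m).factorial : ℝ) ≠ 0 := Nat.cast_ne_zero.mpr (Nat.factorial_ne_zero _)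
      have hne2 : (m.factorial : ℝ) ≠ 0 := Nat.cast_ne_zero.mpr (Nat.factorial_ne_zero _)
      have hne3 : (2 : ℝ) ^ m ≠ 0 := by positivity
      field_simp
      push_cast [hnm]
      ring
    · have hev2 : ¬ Even (n + 2) := by
        intro h; exact hev (by rcases h with ⟨m, hm⟩; exact ⟨m - 1, by omega⟩)
      rw [if_neg hev, if_neg hev2]
      ring

lemma gauss_weight (d2 : ℝ) (hd2 : 0 ≤ d2) (p : Polynomial ℝ) :
    ∫ x, Real.exp (-d2 * x ^ 2) * p.eval x ∂stdGauss
      = Real.sqrt (1 / (1 + 2 * d2)) *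
        ∫ u, p.eval (Real.sqrt (1 / (1 + 2 * d2)) * u) ∂stdGauss := by
  have hw : (0 : ℝ) < 1 + 2 * d2 := by linarith
  set v : ℝ := 1 / (1 + 2 * d2) with hv
  have hv0 : 0 < v := by positivity
  set vNN : ℝ≥0 := ⟨v, hv0.le⟩ with hvNN
  have hvNN0 : vNN ≠ 0 := by
    intro h
    have : v = 0 := congrArg NNReal.toReal h
    exact hv0.ne' this
  -- pointwise density identity
  have hpoint : ∀ x : ℝ, gaussianPDFReal 0 1 x * Real.exp (-d2 * x ^ 2)
      = Real.sqrt v * gaussianPDFReal 0 vNN x := by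
    intro x
    rw [pdf_std, pdf_eval]
    have hcoe : ((vNN : ℝ≥0) : ℝ) = v := rfl
    rw [hcoe]
    have hsq : Real.sqrt (2 * π * v) = Real.sqrt (2 * π) * Real.sqrt v := by
      rw [← Real.sqrt_mul (by positivity)]
    have hexp : Real.exp (-(1/2) * x ^ 2) * Real.exp (-d2 * x ^ 2)
        = Real.exp (-(x - 0) ^ 2 / (2 * v)) := by
      rw [← Real.exp_add]
      congr 1
      rw [hv]
      field_simp
      ring
    rw [hsq, ← hexp]
    have hsv : Real.sqrt v ≠ 0 := by positivity
    field_simp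
  calc ∫ x, Real.exp (-d2 * x ^ 2) * p.eval x ∂stdGauss
      = ∫ x, gaussianPDFReal 0 1 x * (Real.exp (-d2 * x ^ 2) * p.eval x) := by
        rw [integral_stdGauss_eq]
    _ = ∫ x, Real.sqrt v * (gaussianPDFReal 0 vNN x * p.eval x) := by
        congr 1; funext x
        rw [← mul_assoc, hpoint x]; ring
    _ = Real.sqrt v * ∫ x, gaussianPDFReal 0 vNN x * p.eval x := integral_const_mul _ _
    _ = Real.sqrt v * ∫ x, p.eval x ∂(gaussianReal 0 vNN) := by
        rw [integral_gaussianReal_bridge 0 vNN hvNN0]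
    _ = Real.sqrt v * ∫ u, p.eval (Real.sqrt v * u) ∂stdGauss := by
        congr 1
        have hveq : (⟨Real.sqrt v ^ 2, sq_nonneg _⟩ * 1 : ℝ≥0) = vNN := by
          apply NNReal.coe_injective
          simp [Real.sq_sqrt hv0.le, hvNN]
          exact congrArg NNReal.toReal (mul_one vNN)
        have hmap : (gaussianReal 0 1).map (fun u => Real.sqrt v * u) = gaussianReal 0 vNN := by
          have h := gaussianReal_map_const_mul (μ := 0) (v := 1) (Real.sqrt v)
          simp only [mul_zero] at h
          exact h.trans (congrArg (gaussianReal 0) hveq)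
        rw [← hmap, integral_map ((measurable_const_mul _).aemeasurable)
          p.continuous.aestronglyMeasurable]
        rfl

lemma oneDim {a d2 : ℝ} (ha : a ≠ 0) (hd2 : 0 ≤ d2) {Np : ℕ} (hNp : 1 ≤ Np)
    (x w : Fin Np → ℝ)
    (hexact : ∀ p : Polynomial ℝ, p.natDegree ≤ 2 * Np - 1 →
      ∑ n, w n * p.eval (x n) = ∫ t, p.eval t ∂stdGauss)
    (Ii : ℕ) (hIi : Ii < Np) :
    Real.sqrt (1 / (1 + 2 * d2)) * ∑ n, w n *
        ((∑ m ∈ Finset.range ((Np - 1) / 2 + 1),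
          1 / (2 ^ m * (m.factorial : ℝ)) * (a ^ 2 / (1 + 2 * d2) - 1) ^ m * H (2 * m) (x n))
          * H Ii (x n))
      = ∫ y, Real.exp (-d2 * y ^ 2) * H Ii (a * y) ∂stdGauss := by
  have hw : (0 : ℝ) < 1 + 2 * d2 := by linarith
  set s : ℝ := a ^ 2 / (1 + 2 * d2) - 1 with hs
  set M : ℕ := (Np - 1) / 2 + 1 with hM
  set Q : Polynomial ℝ := ∑ m ∈ Finset.range M,
    C (1 / (2 ^ m * (m.factorial : ℝ)) * s ^ m) * hermiteR (2 * m) with hQ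
  set P : Polynomial ℝ := Q * hermiteR Ii with hP
  -- rewrite each summand as P.eval (x n)
  have hsummand : ∀ n, w n *
      ((∑ m ∈ Finset.range M,
        1 / (2 ^ m * (m.factorial : ℝ)) * s ^ m * H (2 * m) (x n)) * H Ii (x n))
      = w n * P.eval (x n) := by
    intro n
    congr 1
    rw [hP, eval_mul, hQ, eval_finset_sum]
    congr 1
    · apply Finset.sum_congr rfl
      intro m _
      rw [eval_mul, eval_C, H_eq]
    · rw [H_eq]
  -- degree bound
  have hdeg : P.natDegree ≤ 2 * Np - 1 := by
    have h1 : Q.natDegree ≤ Np - 1 := by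
      apply Polynomial.natDegree_sum_le_of_forall_le
      intro m hm
      have hm' : m < M := Finset.mem_range.mp hm
      refine le_trans (natDegree_mul_le) ?_
      rw [natDegree_C, natDegree_hermiteR]
      omega
    have h2 : (hermiteR Ii).natDegree = Ii := natDegree_hermiteR Ii
    refine le_trans (natDegree_mul_le) ?_
    omega
  -- evaluate the quadrature sum
  have hquad : ∑ n, w n * P.eval (x n) = ∫ t, P.eval t ∂stdGauss := hexact P hdeg
  have hPsum : P = ∑ m ∈ Finset.range M,
      C (1 / (2 ^ m * (m.factorial : ℝ)) * s ^ m) * (hermiteR (2 * m) * hermiteR Ii) := by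
    rw [hP, hQ, Finset.sum_mul]
    apply Finset.sum_congr rfl
    intro m _
    ring
  have hint : ∫ t, P.eval t ∂stdGauss
      = ∑ m ∈ Finset.range M, 1 / (2 ^ m * (m.factorial : ℝ)) * s ^ m *
          (if 2 * m = Ii then (Ii.factorial : ℝ) else 0) := by
    rw [hPsum]
    have : ∀ t : ℝ, (∑ m ∈ Finset.range M,
        C (1 / (2 ^ m * (m.factorial : ℝ)) * s ^ m) * (hermiteR (2 * m) * hermiteR Ii)).eval t
        = ∑ m ∈ Finset.range M, 1 / (2 ^ m * (m.factorial : ℝ)) * s ^ m *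
            (hermiteR (2 * m) * hermiteR Ii).eval t := by
      intro t
      rw [eval_finset_sum]
      apply Finset.sum_congr rfl
      intro m _
      rw [eval_mul, eval_C]
    simp only [this]
    rw [integral_finset_sum]
    · apply Finset.sum_congr rfl
      intro m _
      rw [integral_const_mul, ortho (2 * m) Ii]
    · intro m _
      exact (integrable_poly_stdGauss (hermiteR (2 * m) * hermiteR Ii)).const_mul _
  -- closed form of the sum
  have hclosed : ∑ m ∈ Finset.range M, 1 / (2 ^ m * (m.factorial : ℝ)) * s ^ m *
        (if 2 * m = Ii then (Ii.factorial : ℝ) else 0)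
      = if Even Ii then
          (Ii.factorial : ℝ) / (2 ^ (Ii / 2) * ((Ii / 2).factorial : ℝ)) * s ^ (Ii / 2)
        else 0 := by
    by_cases hev : Even Ii
    · obtain ⟨k, hk⟩ := id hev
      have hk2 : Ii / 2 = k := by omega
      have hmem : Ii / 2 ∈ Finset.range M := by
        rw [Finset.mem_range, hM]
        omega
      rw [if_pos hev, Finset.sum_eq_single_of_mem (Ii / 2) hmem]
      · rw [if_pos (by omega)]
        have hne2 : (2 : ℝ) ^ (Ii / 2) ≠ 0 := by positivity
        have hnef : (((Ii / 2).factorial : ℝ)) ≠ 0 := Nat.cast_ne_zero.mpr (Nat.factorial_ne_zero _)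
        field_simp
      · intro b _ hb
        rw [if_neg (by omega), mul_zero]
    · rw [if_neg hev]
      apply Finset.sum_eq_zero
      intro m _
      rw [if_neg (fun h => hev ⟨m, by omega⟩), mul_zero]
  -- right-hand side
  have hrhs : ∫ y, Real.exp (-d2 * y ^ 2) * H Ii (a * y) ∂stdGauss
      = Real.sqrt (1 / (1 + 2 * d2)) *
        (if Even Ii then
          (Ii.factorial : ℝ) / (2 ^ (Ii / 2) * ((Ii / 2).factorial : ℝ)) * s ^ (Ii / 2)
        else 0) := by
    have hpe : ∀ y : ℝ, H Ii (a * y) = ((hermiteR Ii).comp (C a * X)).eval y := by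
      intro y
      rw [H_eq, eval_comp]
      simp
    simp only [hpe]
    rw [gauss_weight d2 hd2]
    congr 1
    have hpe2 : ∀ u : ℝ, ((hermiteR Ii).comp (C a * X)).eval (Real.sqrt (1 / (1 + 2 * d2)) * u)
        = ((hermiteR Ii).comp (C (a * Real.sqrt (1 / (1 + 2 * d2))) * X)).eval u := by
      intro u
      rw [eval_comp, eval_comp]
      simp
      ring_nf
    simp only [hpe2]
    rw [int_herm_scaled]
    have hc2 : (a * Real.sqrt (1 / (1 + 2 * d2))) ^ 2 - 1 = s := by
      rw [mul_pow, Real.sq_sqrt (by positivity), hs]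
      field_simp
    rw [hc2]
  rw [hrhs]
  congr 1
  simp only [hsummand]
  rw [hquad, hint, hclosed]

lemma key (α β d2 : ℝ) (hα : 0 < α) (hβ : 0 < β) (hd2 : 0 ≤ d2)
    {Np : ℕ} (hNp : 1 ≤ Np) (x w : Fin Np → ℝ)
    (hexact : ∀ p : Polynomial ℝ, p.natDegree ≤ 2 * Np - 1 →
      ∑ n, w n * p.eval (x n) = ∫ t, p.eval t ∂stdGauss)
    (Ii : ℕ) (hIi : Ii < Np) :
    ∑ n, (Real.sqrt (1 / (1 + 2 * d2)) * w n *
        Real.exp (d2 * (x n / (Real.sqrt 2 * α * β)) ^ 2) *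
        ∑ m ∈ Finset.range ((Np - 1) / 2 + 1),
          1 / (2 ^ m * (m.factorial : ℝ)) * (2 * α ^ 2 * β ^ 2 / (1 + 2 * d2) - 1) ^ m *
            H (2 * m) (x n)) *
      (Real.sqrt (β / (Ii.factorial : ℝ)) * Real.exp (-d2 * (x n / (Real.sqrt 2 * α * β)) ^ 2) *
        H Ii (Real.sqrt 2 * α * β * (x n / (Real.sqrt 2 * α * β))))
      = ∫ y, Real.sqrt (β / (Ii.factorial : ℝ)) * Real.exp (-d2 * y ^ 2) *
          H Ii (Real.sqrt 2 * α * β * y) ∂stdGauss := by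
  have hs2 : (0:ℝ) < Real.sqrt 2 := Real.sqrt_pos.mpr (by norm_num)
  have ha : Real.sqrt 2 * α * β ≠ 0 := by positivity
  have ha2 : (Real.sqrt 2 * α * β) ^ 2 = 2 * α ^ 2 * β ^ 2 := by
    rw [mul_pow, mul_pow, Real.sq_sqrt (by norm_num : (0:ℝ) ≤ 2)]
  have hx' : ∀ n, H Ii (Real.sqrt 2 * α * β * (x n / (Real.sqrt 2 * α * β))) = H Ii (x n) := by
    intro n
    rw [mul_div_cancel₀ _ ha]
  simp only [hx']
  rw [← ha2]
  set c : ℝ := Real.sqrt (β / (Ii.factorial : ℝ)) with hc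
  have hcancel : ∀ A : ℝ, Real.exp (d2 * A) * Real.exp (-d2 * A) = 1 := by
    intro A
    rw [← Real.exp_add, show d2 * A + -d2 * A = 0 by ring, Real.exp_zero]
  have hterm : ∀ n, (Real.sqrt (1 / (1 + 2 * d2)) * w n *
        Real.exp (d2 * (x n / (Real.sqrt 2 * α * β)) ^ 2) *
        ∑ m ∈ Finset.range ((Np - 1) / 2 + 1),
          1 / (2 ^ m * (m.factorial : ℝ)) *
            ((Real.sqrt 2 * α * β) ^ 2 / (1 + 2 * d2) - 1) ^ m * H (2 * m) (x n)) *
      (c * Real.exp (-d2 * (x n / (Real.sqrt 2 * α * β)) ^ 2) * H Ii (x n))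
      = c * (Real.sqrt (1 / (1 + 2 * d2)) * (w n *
          ((∑ m ∈ Finset.range ((Np - 1) / 2 + 1),
            1 / (2 ^ m * (m.factorial : ℝ)) *
              ((Real.sqrt 2 * α * β) ^ 2 / (1 + 2 * d2) - 1) ^ m * H (2 * m) (x n))
            * H Ii (x n)))) := by
    intro n
    set A := (x n / (Real.sqrt 2 * α * β)) ^ 2
    set S := ∑ m ∈ Finset.range ((Np - 1) / 2 + 1),
      1 / (2 ^ m * (m.factorial : ℝ)) *
        ((Real.sqrt 2 * α * β) ^ 2 / (1 + 2 * d2) - 1) ^ m * H (2 * m) (x n)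
    calc (Real.sqrt (1 / (1 + 2 * d2)) * w n * Real.exp (d2 * A) * S) *
          (c * Real.exp (-d2 * A) * H Ii (x n))
        = (Real.sqrt (1 / (1 + 2 * d2)) * w n * S * (c * H Ii (x n))) *
            (Real.exp (d2 * A) * Real.exp (-d2 * A)) := by ring
      _ = c * (Real.sqrt (1 / (1 + 2 * d2)) * (w n * (S * H Ii (x n)))) := by
          rw [hcancel A]; ring
  simp only [hterm]
  rw [← Finset.mul_sum, ← Finset.mul_sum,
    oneDim ha hd2 hNp x w hexact Ii hIi, ← integral_const_mul]
  congr 1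
  funext y
  ring

theorem stmt_19 (d : ℕ) (hd : 1 ≤ d)
    (ℓ α : Fin d → ℝ) (hℓ : ∀ i, 0 < ℓ i) (hα : ∀ i, 0 < α i)
    (ε β δ2 : Fin d → ℝ)
    (hε : ∀ i, ε i = 1 / (Real.sqrt 2 * ℓ i))
    (hβ : ∀ i, β i = (1 + (2 * ε i / α i) ^ 2) ^ ((1 : ℝ) / 4))
    (hδ2 : ∀ i, δ2 i = (α i) ^ 2 * ((β i) ^ 2 - 1) / 2)
    (φ : Fin d → ℕ → ℝ → ℝ)
    (hφ : ∀ i n x, φ i n x = Real.sqrt (β i / (n.factorial : ℝ)) *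
      Real.exp (-δ2 i * x ^ 2) * H n (Real.sqrt 2 * α i * β i * x))
    (N : Fin d → ℕ) (hN : ∀ i, 1 ≤ N i)
    (xGH : (i : Fin d) → Fin (N i) → ℝ) (wGH : (i : Fin d) → Fin (N i) → ℝ)
    (hinj : ∀ i, Function.Injective (xGH i))
    (hroot : ∀ i n, H (N i) (xGH i n) = 0)
    (hexact : ∀ i, ∀ p : Polynomial ℝ, p.natDegree ≤ 2 * N i - 1 →
      ∑ n, wGH i n * p.eval (xGH i n) = ∫ t, p.eval t ∂stdGauss)
    (xt : (i : Fin d) → Fin (N i) → ℝ)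
    (hxt : ∀ i n, xt i n = xGH i n / (Real.sqrt 2 * α i * β i))
    (wt : (i : Fin d) → Fin (N i) → ℝ)
    (hwt : ∀ i n, wt i n = Real.sqrt (1 / (1 + 2 * δ2 i)) * wGH i n *
      Real.exp (δ2 i * xt i n ^ 2) *
      ∑ m ∈ Finset.range ((N i - 1) / 2 + 1),
        (1 / (2 ^ m * (m.factorial : ℝ))) *
          (2 * (α i) ^ 2 * (β i) ^ 2 / (1 + 2 * δ2 i) - 1) ^ m * H (2 * m) (xGH i n))
    (I : Fin d → ℕ) (hI : ∀ i, I i < N i) :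
    ∑ J : (i : Fin d) → Fin (N i), (∏ i, wt i (J i)) * ∏ i, φ i (I i) (xt i (J i)) =
      ∫ y : Fin d → ℝ, ∏ i, φ i (I i) (y i) ∂(Measure.pi fun _ => stdGauss) := by
  have hL : ∀ J : (i : Fin d) → Fin (N i),
      (∏ i, wt i (J i)) * ∏ i, φ i (I i) (xt i (J i))
        = ∏ i, (wt i (J i) * φ i (I i) (xt i (J i))) := fun J =>
    (Finset.prod_mul_distrib).symm
  simp only [hL]
  rw [← Fintype.prod_sum (fun i j => wt i j * φ i (I i) (xt i j))]
  have hR : ∫ y : Fin d → ℝ, ∏ i, φ i (I i) (y i) ∂(Measure.pi fun _ => stdGauss)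
      = ∏ i, ∫ t, φ i (I i) t ∂stdGauss := by
    letI : MeasureSpace ℝ := ⟨stdGauss⟩
    haveI : SigmaFinite (volume : Measure ℝ) := by
      show SigmaFinite stdGauss; infer_instance
    exact MeasureTheory.integral_fintype_prod_eq_prod (fun i t => φ i (I i) t)
  rw [hR]
  apply Finset.prod_congr rfl
  intro i _
  -- per-coordinate identity
  have hb1 : 1 ≤ β i := by
    rw [hβ]
    calc (1:ℝ) = 1 ^ ((1:ℝ)/4) := (Real.one_rpow _).symm
      _ ≤ (1 + (2 * ε i / α i) ^ 2) ^ ((1:ℝ)/4) :=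
        Real.rpow_le_rpow zero_le_one (le_add_of_nonneg_right (sq_nonneg _)) (by norm_num)
  have hbpos : 0 < β i := lt_of_lt_of_le one_pos hb1
  have hd2 : 0 ≤ δ2 i := by
    rw [hδ2]
    have h2 : (0:ℝ) ≤ (β i) ^ 2 - 1 := by nlinarith
    exact div_nonneg (mul_nonneg (sq_nonneg _) h2) (by norm_num)
  have hres := key (α i) (β i) (δ2 i) (hα i) hbpos hd2 (hN i) (xGH i) (wGH i)
    (hexact i) (I i) (hI i)
  simp only [hwt, hφ, hxt]
  exact hres
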